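/- (Proposition 2, vector case) Let X be a discrete random vector with finite support 𝒳, and for each nonempty proper subset α ⊆ 𝒳 let A_⟨α⟩ be the binary partition variable (A_⟨α⟩ = α iff X ∈ α), with A_⟨x⟩ denoting the indicator of the singleton {x}. Suppose A_⟨β⟩ is a binary partition variable such that: (1) for any γ ⊆ α, H(A_⟨β⟩ | A_⟨x⟩, x ∈ γ) = 0 if and only if γ = α; and (2) for any γ ⊆ α^c, H(A_⟨β⟩ | A_⟨x⟩, x ∈ γ) = 0 if and only if γ = α^c. Then A_⟨β⟩ = A_⟨α⟩ (i.e., ⟨β⟩ = ⟨α⟩). -/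

import Mathlib

open MeasureTheory Real

/-- Shannon entropy of a finitely-valued random variable `X` under measure `μ`. -/
noncomputable def entropy {Ω : Type*} [MeasurableSpace Ω] (μ : Measure Ω)
    {S : Type*} [Fintype S] (X : Ω → S) : ℝ :=
  ∑ s : S, Real.negMulLog ((μ (X ⁻¹' {s})).toReal)

/-- Conditional Shannon entropy `H(X | Y) = H(X, Y) - H(Y)`. -/
noncomputable def condEntropy {Ω : Type*} [MeasurableSpace Ω] (μ : Measure Ω)
    {S T : Type*} [Fintype S] [Fintype T] (X : Ω → S) (Y : Ω → T) : ℝ :=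
  entropy μ (fun ω => (X ω, Y ω)) - entropy μ Y

/-- Binary entropy function with the convention `0 log 0 = 0`. -/
noncomputable def binEnt (p : ℝ) : ℝ :=
  Real.negMulLog p + Real.negMulLog (1 - p)

/-- Binary partition random variable `A_⟨α⟩` induced by `X` and the set `α`:
it records on which side of the partition `{α, αᶜ}` the value of `X` lies. -/
def part {Ω S : Type*} [DecidableEq S] (X : Ω → S) (α : Finset S) : Ω → Bool :=
  fun ω => decide (X ω ∈ α)

/- ===================== auxiliary lemmas ===================== -/

private lemma aux_key {a b q : ℝ} (hb0 : 0 ≤ b) (hba : b ≤ a) (haq : a ≤ q) (hq1 : q ≤ 1)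
    (hqab : q ≤ a + b) : Real.negMulLog q ≤ Real.negMulLog a + Real.negMulLog b := by
  rcases hb0.eq_or_lt with hb | hb
  · have hqa : q = a := le_antisymm (by linarith) haq
    simp [← hb, hqa]
  · have ha0 : 0 < a := lt_of_lt_of_le hb hba
    have hq0 : 0 < q := lt_of_lt_of_le ha0 haq
    have h1 : Real.log a ≤ Real.log q := Real.log_le_log ha0 haq
    have h2 : Real.log b ≤ Real.log a := Real.log_le_log hb hba
    have h3 : Real.log a ≤ 0 := Real.log_nonpos ha0.le (le_trans haq hq1)
    have e1 : q * Real.log a ≤ q * Real.log q := by nlinarith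
    have e2 : a * Real.log a + b * Real.log a ≤ q * Real.log a := by nlinarith
    have e3 : b * Real.log b ≤ b * Real.log a := by nlinarith
    simp only [Real.negMulLog, neg_mul]
    linarith

private lemma negMulLog_pos' {b : ℝ} (hb0 : 0 < b) (hb1 : b < 1) : 0 < Real.negMulLog b := by
  have := Real.log_neg hb0 hb1
  simp only [Real.negMulLog, neg_mul]
  nlinarith

private lemma aux_eq {a b q : ℝ} (hb0 : 0 < b) (hba : b ≤ a) (haq : a ≤ q) (hq1 : q ≤ 1)
    (hqab : q ≤ a + b)
    (heq : Real.negMulLog q = Real.negMulLog a + Real.negMulLog b) : a = 1 ∧ b = 1 := by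
  have ha0 : 0 < a := lt_of_lt_of_le hb0 hba
  have hq0 : 0 < q := lt_of_lt_of_le ha0 haq
  have ha1 : a ≤ 1 := le_trans haq hq1
  rcases haq.eq_or_lt with haq' | haq'
  · -- a = q, hence negMulLog b = 0, hence b = 1 (since 0 < b ≤ 1), hence a = 1
    have hfb : Real.negMulLog b = 0 := by rw [← haq'] at heq; linarith
    have hb1 : b = 1 := by
      by_contra hb1
      have : b < 1 := lt_of_le_of_ne (le_trans hba ha1) hb1
      exact (negMulLog_pos' hb0 this).ne' hfb
    exact ⟨le_antisymm ha1 (hb1 ▸ hba), hb1⟩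
  · -- a < q : derive a strict inequality, contradicting heq
    exfalso
    have h1 : Real.log a < Real.log q := Real.log_lt_log ha0 haq'
    have h2 : Real.log b ≤ Real.log a := Real.log_le_log hb0 hba
    have h3 : Real.log a ≤ 0 := Real.log_nonpos ha0.le ha1
    have e1 : q * Real.log a < q * Real.log q := by nlinarith
    have e2 : a * Real.log a + b * Real.log a ≤ q * Real.log a := by nlinarith
    have e3 : b * Real.log b ≤ b * Real.log a := by nlinarith
    simp only [Real.negMulLog, neg_mul] at heq
    linarith

private lemma aux_eq' {a b q : ℝ} (ha0 : 0 < a) (hb0 : 0 < b) (haq : a ≤ q) (hbq : b ≤ q)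
    (hq1 : q ≤ 1) (hqab : q ≤ a + b)
    (heq : Real.negMulLog q = Real.negMulLog a + Real.negMulLog b) : a = 1 ∧ b = 1 := by
  rcases le_total b a with h | h
  · exact aux_eq hb0 h haq hq1 hqab heq
  · have := aux_eq ha0 h hbq hq1 (by linarith) (by rw [heq]; ring)
    exact ⟨this.2, this.1⟩

/-- The conditional entropy of `part X β` given the family of singleton indicators over `γ`
reduces to a single three-term expression coming from the "all false" atom. -/
private lemma condEntropy_part_eq {Ω : Type*} [MeasurableSpace Ω] (μ : Measure Ω)
    {S : Type*} [Fintype S] [DecidableEq S] (X : Ω → S) (β γ : Finset S) :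
    condEntropy μ (part X β) (fun ω => fun x : {x // x ∈ γ} => part X {x.1} ω) =
      Real.negMulLog ((μ (X ⁻¹' ↑(γᶜ ∩ β))).toReal)
      + Real.negMulLog ((μ (X ⁻¹' ↑(γᶜ ∩ βᶜ))).toReal)
      - Real.negMulLog ((μ (X ⁻¹' ↑(γᶜ : Finset S))).toReal) := by
  classical
  set Y : Ω → ({x // x ∈ γ} → Bool) := fun ω => fun x => part X {x.1} ω with hYdef
  have hsplit : condEntropy μ (part X β) Y =
      ∑ y : {x // x ∈ γ} → Bool,
        (Real.negMulLog ((μ ((fun ω => (part X β ω, Y ω)) ⁻¹' {(true, y)})).toReal)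
        + Real.negMulLog ((μ ((fun ω => (part X β ω, Y ω)) ⁻¹' {(false, y)})).toReal)
        - Real.negMulLog ((μ (Y ⁻¹' {y})).toReal)) := by
    rw [condEntropy, entropy, entropy, Fintype.sum_prod_type, Fintype.sum_bool,
      Finset.sum_sub_distrib, Finset.sum_add_distrib]
  rw [hsplit]
  rw [Fintype.sum_eq_single (fun _ => false : {x // x ∈ γ} → Bool) ?off]
  case off =>
    intro y hy
    obtain ⟨x, hx⟩ := Function.ne_iff.mp hy
    have hx' : y x = true := by simpa using hx
    have hXx : ∀ ω, Y ω = y → X ω = x.1 := by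
      intro ω hω
      have h := congrFun hω x
      rw [hx'] at h
      simpa [hYdef, part] using h
    by_cases hxb : (x : S) ∈ β
    · have e1 : (fun ω => (part X β ω, Y ω)) ⁻¹' {(true, y)} = Y ⁻¹' {y} := by
        ext ω
        simp only [Set.mem_preimage, Set.mem_singleton_iff, Prod.ext_iff]
        constructor
        · rintro ⟨-, h⟩; exact h
        · intro h; exact ⟨by simp [part, hXx ω h, hxb], h⟩
      have e2 : (fun ω => (part X β ω, Y ω)) ⁻¹' {(false, y)} = (∅ : Set Ω) := by
        ext ω
        simp only [Set.mem_preimage, Set.mem_singleton_iff, Prod.ext_iff, Set.mem_empty_iff_false,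
          iff_false, not_and]
        intro h1 h2
        rw [show part X β ω = true by simp [part, hXx ω h2, hxb]] at h1
        exact absurd h1 (by simp)
      rw [e1, e2]
      simp
    · have e1 : (fun ω => (part X β ω, Y ω)) ⁻¹' {(false, y)} = Y ⁻¹' {y} := by
        ext ω
        simp only [Set.mem_preimage, Set.mem_singleton_iff, Prod.ext_iff]
        constructor
        · rintro ⟨-, h⟩; exact h
        · intro h; exact ⟨by simp [part, hXx ω h, hxb], h⟩
      have e2 : (fun ω => (part X β ω, Y ω)) ⁻¹' {(true, y)} = (∅ : Set Ω) := by
        ext ω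
        simp only [Set.mem_preimage, Set.mem_singleton_iff, Prod.ext_iff, Set.mem_empty_iff_false,
          iff_false, not_and]
        intro h1 h2
        rw [show part X β ω = false by simp [part, hXx ω h2, hxb]] at h1
        exact absurd h1 (by simp)
      rw [e1, e2]
      simp
  -- the main atom
  have e0 : Y ⁻¹' {(fun _ => false : {x // x ∈ γ} → Bool)} = X ⁻¹' ↑(γᶜ : Finset S) := by
    ext ω
    simp only [Set.mem_preimage, Set.mem_singleton_iff, funext_iff, hYdef, part,
      Finset.coe_compl, Set.mem_compl_iff, Finset.mem_coe, Subtype.forall,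
      Finset.mem_singleton, decide_eq_false_iff_not]
    constructor
    · intro h hmem; exact h (X ω) hmem rfl
    · intro h a ha hxa; exact h (hxa ▸ ha)
  have e1 : (fun ω => (part X β ω, Y ω)) ⁻¹' {(true, (fun _ => false : {x // x ∈ γ} → Bool))}
      = X ⁻¹' ↑(γᶜ ∩ β) := by
    ext ω
    simp only [Set.mem_preimage, Set.mem_singleton_iff, Prod.ext_iff, funext_iff, hYdef, part,
      Finset.coe_inter, Set.mem_inter_iff, Finset.coe_compl, Set.mem_compl_iff, Finset.mem_coe,
      Subtype.forall, Finset.mem_singleton, decide_eq_false_iff_not, decide_eq_true_eq]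
    constructor
    · rintro ⟨hb, h⟩; exact ⟨fun hmem => h (X ω) hmem rfl, hb⟩
    · rintro ⟨h, hb⟩; exact ⟨hb, fun a ha hxa => h (hxa ▸ ha)⟩
  have e2 : (fun ω => (part X β ω, Y ω)) ⁻¹' {(false, (fun _ => false : {x // x ∈ γ} → Bool))}
      = X ⁻¹' ↑(γᶜ ∩ βᶜ) := by
    ext ω
    simp only [Set.mem_preimage, Set.mem_singleton_iff, Prod.ext_iff, funext_iff, hYdef, part,
      Finset.coe_inter, Set.mem_inter_iff, Finset.coe_compl, Set.mem_compl_iff, Finset.mem_coe,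
      Subtype.forall, Finset.mem_singleton, decide_eq_false_iff_not]
    constructor
    · rintro ⟨hb, h⟩; exact ⟨fun hmem => h (X ω) hmem rfl, hb⟩
    · rintro ⟨h, hb⟩; exact ⟨hb, fun a ha hxa => h (hxa ▸ ha)⟩
  rw [e0, e1, e2]

/-- Proposition 2, vector case: if a binary partition variable `A_⟨β⟩`
is determined by the indicators `(A_⟨x⟩, x ∈ γ)` exactly when `γ = α` (among `γ ⊆ α`)
and exactly when `γ = αᶜ` (among `γ ⊆ αᶜ`), then `⟨β⟩ = ⟨α⟩`. -/
theorem stmt11 {Ω : Type*} [MeasurableSpace Ω] (μ : Measure Ω) [IsProbabilityMeasure μ]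
    {S : Type*} [Fintype S] [DecidableEq S] (hS : 3 ≤ Fintype.card S)
    (X : Ω → S) (hsupp : ∀ s : S, μ (X ⁻¹' {s}) ≠ 0)
    (α β : Finset S)
    (hα : α.Nonempty) (hα' : α ≠ Finset.univ)
    (hβ : β.Nonempty) (hβ' : β ≠ Finset.univ)
    (h1 : ∀ γ : Finset S, γ ⊆ α →
      (condEntropy μ (part X β) (fun ω => fun x : {x // x ∈ γ} => part X {x.1} ω) = 0 ↔
        γ = α))
    (h2 : ∀ γ : Finset S, γ ⊆ αᶜ →
      (condEntropy μ (part X β) (fun ω => fun x : {x // x ∈ γ} => part X {x.1} ω) = 0 ↔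
        γ = αᶜ)) :
    β = α ∨ β = αᶜ := by
  classical
  set m : Finset S → ℝ := fun D => (μ (X ⁻¹' ↑D)).toReal with hm
  have hfin : ∀ s : Set Ω, μ s ≠ ⊤ := fun s => (measure_lt_top μ s).ne
  have hmono : ∀ {D E : Finset S}, D ⊆ E → m D ≤ m E := by
    intro D E h
    exact ENNReal.toReal_mono (hfin _)
      (measure_mono (Set.preimage_mono (Finset.coe_subset.mpr h)))
  have hmuniv : m Finset.univ = 1 := by
    simp [hm]
  have hm1 : ∀ D, m D ≤ 1 := fun D => hmuniv ▸ hmono (Finset.subset_univ D)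
  have hpos : ∀ {D : Finset S}, D.Nonempty → 0 < m D := by
    rintro D ⟨s, hs⟩
    have hsub : ({s} : Set S) ⊆ ↑D := by simpa using hs
    have h1' : μ (X ⁻¹' {s}) ≤ μ (X ⁻¹' ↑D) := measure_mono (Set.preimage_mono hsub)
    have hne : μ (X ⁻¹' ↑D) ≠ 0 := fun h =>
      hsupp s (le_antisymm (h ▸ h1') zero_le)
    exact ENNReal.toReal_pos hne (hfin _)
  have hsplitm : ∀ D : Finset S, m D ≤ m (D ∩ β) + m (D ∩ βᶜ) := by
    intro D
    have hsub : X ⁻¹' ↑D ⊆ (X ⁻¹' ↑(D ∩ β)) ∪ (X ⁻¹' ↑(D ∩ βᶜ)) := by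
      intro ω hω
      by_cases hb : X ω ∈ β
      · left; simp only [Set.mem_preimage, Finset.coe_inter, Set.mem_inter_iff, Finset.mem_coe]
        exact ⟨hω, hb⟩
      · right; simp only [Set.mem_preimage, Finset.coe_inter, Set.mem_inter_iff, Finset.mem_coe,
          Finset.mem_compl]
        exact ⟨hω, hb⟩
    have hle : μ (X ⁻¹' ↑D) ≤ μ (X ⁻¹' ↑(D ∩ β)) + μ (X ⁻¹' ↑(D ∩ βᶜ)) :=
      (measure_mono hsub).trans (measure_union_le _ _)
    calc m D ≤ (μ (X ⁻¹' ↑(D ∩ β)) + μ (X ⁻¹' ↑(D ∩ βᶜ))).toReal :=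
          ENNReal.toReal_mono (ENNReal.add_ne_top.mpr ⟨hfin _, hfin _⟩) hle
      _ = m (D ∩ β) + m (D ∩ βᶜ) := ENNReal.toReal_add (hfin _) (hfin _)
  have hF : ∀ γ : Finset S,
      condEntropy μ (part X β) (fun ω => fun x : {x // x ∈ γ} => part X {x.1} ω)
        = Real.negMulLog (m (γᶜ ∩ β)) + Real.negMulLog (m (γᶜ ∩ βᶜ))
          - Real.negMulLog (m γᶜ) := fun γ => condEntropy_part_eq μ X β γ
  -- analysis of the vanishing of the three-term expression
  have hzero : ∀ D : Finset S,
      Real.negMulLog (m (D ∩ β)) + Real.negMulLog (m (D ∩ βᶜ)) - Real.negMulLog (m D) = 0 →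
      D ∩ β = ∅ ∨ D ∩ βᶜ = ∅ ∨ (m (D ∩ β) = 1 ∧ m (D ∩ βᶜ) = 1) := by
    intro D heq
    by_cases h1' : D ∩ β = ∅
    · exact Or.inl h1'
    by_cases h2' : D ∩ βᶜ = ∅
    · exact Or.inr (Or.inl h2')
    refine Or.inr (Or.inr ?_)
    exact aux_eq' (hpos (Finset.nonempty_iff_ne_empty.mpr h1'))
      (hpos (Finset.nonempty_iff_ne_empty.mpr h2'))
      (hmono Finset.inter_subset_left) (hmono Finset.inter_subset_left)
      (hm1 D) (hsplitm D) (by linarith)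
  -- pathology elimination: if m (D∩β) = 1 = m (D∩βᶜ) for D ⊆ E with strict hypothesis at E: False
  have hpath1 : ¬ (m (αᶜ ∩ β) = 1 ∧ m (αᶜ ∩ βᶜ) = 1) := by
    rintro ⟨hp1, hp2⟩
    obtain ⟨s, hs⟩ := hα
    have hsub : α \ {s} ⊆ α := Finset.sdiff_subset
    have hne : α \ {s} ≠ α := by
      intro h
      have : s ∈ α \ {s} := h.symm ▸ hs
      simp at this
    have hcond : condEntropy μ (part X β)
        (fun ω => fun x : {x // x ∈ α \ {s}} => part X {x.1} ω) ≠ 0 :=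
      fun h => hne ((h1 _ hsub).mp h)
    apply hcond
    rw [hF]
    have hDsub : αᶜ ⊆ (α \ {s})ᶜ := Finset.compl_subset_compl.mpr hsub
    have e1 : m ((α \ {s})ᶜ ∩ β) = 1 :=
      le_antisymm (hm1 _)
        (hp1 ▸ hmono (Finset.inter_subset_inter hDsub (Finset.Subset.refl _)))
    have e2 : m ((α \ {s})ᶜ ∩ βᶜ) = 1 :=
      le_antisymm (hm1 _)
        (hp2 ▸ hmono (Finset.inter_subset_inter hDsub (Finset.Subset.refl _)))
    have e3 : m ((α \ {s})ᶜ) = 1 :=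
      le_antisymm (hm1 _) (e1 ▸ hmono Finset.inter_subset_left)
    rw [e1, e2, e3]
    simp
  have hpath2 : ¬ (m (α ∩ β) = 1 ∧ m (α ∩ βᶜ) = 1) := by
    rintro ⟨hp1, hp2⟩
    have hαc : (αᶜ : Finset S).Nonempty :=
      Finset.nonempty_iff_ne_empty.mpr (by
        intro h
        exact hα' (by simpa using congrArg compl h))
    obtain ⟨s, hs⟩ := hαc
    have hsub : αᶜ \ {s} ⊆ αᶜ := Finset.sdiff_subset
    have hne : αᶜ \ {s} ≠ αᶜ := by
      intro h
      have : s ∈ αᶜ \ {s} := h.symm ▸ hs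
      simp at this
    have hcond : condEntropy μ (part X β)
        (fun ω => fun x : {x // x ∈ αᶜ \ {s}} => part X {x.1} ω) ≠ 0 :=
      fun h => hne ((h2 _ hsub).mp h)
    apply hcond
    rw [hF]
    have hDsub : α ⊆ (αᶜ \ {s})ᶜ := by
      intro t ht
      simp only [Finset.mem_compl, Finset.mem_sdiff, not_and, not_not, Finset.mem_compl]
      intro hc
      exact absurd ht hc
    have e1 : m ((αᶜ \ {s})ᶜ ∩ β) = 1 :=
      le_antisymm (hm1 _)
        (hp1 ▸ hmono (Finset.inter_subset_inter hDsub (Finset.Subset.refl _)))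
    have e2 : m ((αᶜ \ {s})ᶜ ∩ βᶜ) = 1 :=
      le_antisymm (hm1 _)
        (hp2 ▸ hmono (Finset.inter_subset_inter hDsub (Finset.Subset.refl _)))
    have e3 : m ((αᶜ \ {s})ᶜ) = 1 :=
      le_antisymm (hm1 _) (e1 ▸ hmono Finset.inter_subset_left)
    rw [e1, e2, e3]
    simp
  -- apply the hypotheses at γ = α and γ = αᶜ
  have hA : αᶜ ∩ β = ∅ ∨ αᶜ ∩ βᶜ = ∅ := by
    have h0 := (h1 α (Finset.Subset.refl α)).mpr rfl
    rw [hF] at h0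
    rcases hzero αᶜ h0 with h | h | h
    · exact Or.inl h
    · exact Or.inr h
    · exact absurd h hpath1
  have hB : α ∩ β = ∅ ∨ α ∩ βᶜ = ∅ := by
    have h0 := (h2 αᶜ (Finset.Subset.refl αᶜ)).mpr rfl
    rw [hF] at h0
    rw [compl_compl] at h0
    rcases hzero α h0 with h | h | h
    · exact Or.inl h
    · exact Or.inr h
    · exact absurd h hpath2
  -- final boolean-algebra case analysis
  simp only [Finset.eq_empty_iff_forall_notMem] at hA hB
  rcases hA with hA | hA <;> rcases hB with hB | hB
  · -- β ⊆ α and β ∩ α = ∅ : β empty, contradiction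
    exfalso
    obtain ⟨x, hx⟩ := hβ
    by_cases hxa : x ∈ α
    · exact hB x (Finset.mem_inter.mpr ⟨hxa, hx⟩)
    · exact hA x (Finset.mem_inter.mpr ⟨Finset.mem_compl.mpr hxa, hx⟩)
  · -- β ⊆ α and α ⊆ β : β = α
    left
    ext x
    constructor
    · intro hx
      by_contra hxa
      exact hA x (Finset.mem_inter.mpr ⟨Finset.mem_compl.mpr hxa, hx⟩)
    · intro hx
      by_contra hxb
      exact hB x (Finset.mem_inter.mpr ⟨hx, Finset.mem_compl.mpr hxb⟩)
  · -- αᶜ ⊆ β and β ∩ α = ∅ : β = αᶜ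
    right
    ext x
    constructor
    · intro hx
      rw [Finset.mem_compl]
      intro hxa
      exact hB x (Finset.mem_inter.mpr ⟨hxa, hx⟩)
    · intro hx
      by_contra hxb
      exact hA x (Finset.mem_inter.mpr ⟨hx, Finset.mem_compl.mpr hxb⟩)
  · -- αᶜ ⊆ β and α ⊆ β : β = univ, contradiction
    exfalso
    apply hβ'
    ext x
    simp only [Finset.mem_univ, iff_true]
    by_cases hxa : x ∈ α
    · by_contra hxb
      exact hB x (Finset.mem_inter.mpr ⟨hxa, Finset.mem_compl.mpr hxb⟩)
    · by_contra hxb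
      exact hA x (Finset.mem_inter.mpr ⟨Finset.mem_compl.mpr hxa, Finset.mem_compl.mpr hxb⟩)
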